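/- If a linking function f on V equals a star function pOI, then f is weak: for every cycle C in the complete graph on V (a cyclically ordered list of k ≥ 3 distinct vertices), |f(C)| ≤ 1. Moreover f(C) = 0 whenever the cycle C does not contain the apex p. -/

import Mathlib

open scoped Classical

section Defs

variable {V : Type*} {W : Type*}

/-- A map `V³ → ℤ` alternating in its arguments. -/
def IsAlt (f : V → V → V → ℤ) : Prop :=
  (∀ a b c, f b a c = - f a b c) ∧ (∀ a b c, f a c b = - f a b c)

/-- The simplicial cocycle identity. -/
def IsCocycle (f : V → V → V → ℤ) : Prop :=
  ∀ a b c d, f b c d - f a c d + f a b d - f a b c = 0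

/-- A linking function on `V`. -/
def IsLinkingFun (f : V → V → V → ℤ) : Prop := IsAlt f ∧ IsCocycle f

/-- A cycle in the complete graph on `V`: a list of at least 3 distinct vertices. -/
def IsCycle (C : List V) : Prop := C.Nodup ∧ 3 ≤ C.length

/-- The value of `f` on a cycle, via the standard triangulation
`f(C) = ∑_{i=1}^{k-2} f(v₀, vᵢ, vᵢ₊₁)`. -/
def cycleVal (f : V → V → V → ℤ) : List V → ℤ
  | [] => 0
  | v :: rest => ∑ i ∈ Finset.range (rest.length - 1),
      f v (rest.getD i v) (rest.getD (i + 1) v)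

/-- `f` is weak: `|f(C)| ≤ 1` for every cycle `C`. -/
def IsWeak (f : V → V → V → ℤ) : Prop :=
  ∀ C : List V, IsCycle C → |cycleVal f C| ≤ 1

/-- `f` is nontrivial: `f(C) ≠ 0` for some cycle `C`. -/
def IsNontrivial (f : V → V → V → ℤ) : Prop :=
  ∃ C : List V, IsCycle C ∧ cycleVal f C ≠ 0

noncomputable def starEdge (O I : Set V) (x y : V) : ℤ :=
  (if x ∈ O ∧ y ∈ I then 1 else 0) - (if x ∈ I ∧ y ∈ O then 1 else 0)

/-- The star function `pOI`: the alternating function with value `1` on `(p,q,r)`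
for `q ∈ O`, `r ∈ I`, and value `0` on triples not of this form up to reorientation. -/
noncomputable def starFun (p : V) (O I : Set V) (a b c : V) : ℤ :=
  (if a = p then starEdge O I b c else 0)
    - (if b = p then starEdge O I a c else 0)
    + (if c = p then starEdge O I a b else 0)

/-- `({p}, O, I)` is an ordered partition of `V` into three nonempty parts. -/
def IsStarPartition (p : V) (O I : Set V) : Prop :=
  O.Nonempty ∧ I.Nonempty ∧ p ∉ O ∧ p ∉ I ∧ Disjoint O I ∧
    insert p (O ∪ I) = (Set.univ : Set V)

/-- A bilinking form between `V` and `W`. -/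
def IsBilinking (lam : V → V → V → W → W → W → ℤ) : Prop :=
  (∀ u v w, IsLinkingFun (fun a b c => lam a b c u v w)) ∧
  (∀ a b c, IsLinkingFun (lam a b c))

/-- The value of a bilinking form on a pair of cycles. -/
def biCycleVal (lam : V → V → V → W → W → W → ℤ) (C : List V) (D : List W) : ℤ :=
  cycleVal (fun a b c => cycleVal (lam a b c) D) C

/-- `K_V` and `K_W` are weakly linked under `lam`. -/
def WeaklyLinked (lam : V → V → V → W → W → W → ℤ) : Prop :=
  (∀ (C : List V) (D : List W), IsCycle C → IsCycle D → |biCycleVal lam C D| ≤ 1) ∧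
  ∃ (C : List V) (D : List W), IsCycle C ∧ IsCycle D ∧ biCycleVal lam C D ≠ 0

end Defs

section Aux

variable {V : Type*}

noncomputable def psiFn (O : Set V) (x : V) : ℤ := if x ∈ O then 1 else 0

lemma psiFn_mem (O : Set V) (x : V) : psiFn O x = 0 ∨ psiFn O x = 1 := by
  unfold psiFn; split_ifs <;> simp

lemma starEdge_eq_psi {p : V} {O I : Set V} (h : IsStarPartition p O I)
    {b c : V} (hb : b ≠ p) (hc : c ≠ p) :
    starEdge O I b c = psiFn O b - psiFn O c := by
  obtain ⟨-, -, hpO, hpI, hdisj, hcov⟩ := h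
  have hmem : ∀ x : V, x ≠ p → (x ∈ O ∧ x ∉ I) ∨ (x ∈ I ∧ x ∉ O) := by
    intro x hx
    have hx2 : x ∈ insert p (O ∪ I) := by rw [hcov]; trivial
    rcases Set.mem_insert_iff.mp hx2 with h' | h'
    · exact absurd h' hx
    · rcases h' with h' | h'
      · exact Or.inl ⟨h', Set.disjoint_left.mp hdisj h'⟩
      · exact Or.inr ⟨h', Set.disjoint_right.mp hdisj h'⟩
  rcases hmem b hb with ⟨h1, h2⟩ | ⟨h1, h2⟩ <;> rcases hmem c hc with ⟨h3, h4⟩ | ⟨h3, h4⟩ <;>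
    simp [starEdge, psiFn, h1, h2, h3, h4]

lemma starEdge_p_right {p : V} {O I : Set V} (h : IsStarPartition p O I) (x : V) :
    starEdge O I x p = 0 := by
  obtain ⟨-, -, hpO, hpI, -, -⟩ := h
  simp [starEdge, hpO, hpI]

lemma starEdge_p_left {p : V} {O I : Set V} (h : IsStarPartition p O I) (x : V) :
    starEdge O I p x = 0 := by
  obtain ⟨-, -, hpO, hpI, -, -⟩ := h
  simp [starEdge, hpO, hpI]

lemma starFun_eq_psi {p : V} {O I : Set V} (h : IsStarPartition p O I) (a b c : V) :
    starFun p O I a b c =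
      (if a = p then psiFn O b - psiFn O c else 0)
      - (if b = p then psiFn O a - psiFn O c else 0)
      + (if c = p then psiFn O a - psiFn O b else 0) := by
  by_cases ha : a = p <;> by_cases hb : b = p <;> by_cases hc : c = p <;>
    simp [starFun, ha, hb, hc, starEdge_eq_psi h, starEdge_p_left h, starEdge_p_right h]

lemma getD_ne_of {l : List V} {x d : V} (hx : x ∉ l) (hd : d ≠ x) (i : ℕ) :
    l.getD i d ≠ x := by
  by_cases hi : i < l.length
  · rw [List.getD_eq_getElem l d hi]
    intro he
    exact hx (he ▸ List.getElem_mem hi)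
  · rw [List.getD_eq_default l d (le_of_not_gt hi)]
    exact hd

lemma cycleVal_zero_of_not_mem {p : V} {O I : Set V} (h : IsStarPartition p O I)
    (C : List V) (hp : p ∉ C) : cycleVal (starFun p O I) C = 0 := by
  cases C with
  | nil => rfl
  | cons v rest =>
    have hv : v ≠ p := fun hv => hp (hv ▸ List.mem_cons_self (a := v) (l := rest))
    have hr : p ∉ rest := fun hr => hp (List.mem_cons_of_mem v hr)
    show (∑ i ∈ Finset.range (rest.length - 1),
      starFun p O I v (rest.getD i v) (rest.getD (i + 1) v)) = 0
    apply Finset.sum_eq_zero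
    intro i _
    rw [starFun_eq_psi h]
    rw [if_neg hv, if_neg (getD_ne_of hr hv i), if_neg (getD_ne_of hr hv (i + 1))]
    ring

end Aux

theorem star_implies_weak' {V : Type*} (p : V) (O I : Set V)
    (h : IsStarPartition p O I) :
    (∀ C : List V, IsCycle C → |cycleVal (starFun p O I) C| ≤ 1) ∧
    (∀ C : List V, IsCycle C → p ∉ C → cycleVal (starFun p O I) C = 0) := by
  refine ⟨?_, fun C _ hp => cycleVal_zero_of_not_mem h C hp⟩
  intro C hC
  by_cases hpC : p ∈ C
  · obtain ⟨hnd, hlen⟩ := hC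
    cases C with
    | nil => simp at hlen
    | cons v rest =>
      have hm : 2 ≤ rest.length := by
        simp only [List.length_cons] at hlen; omega
      rw [List.nodup_cons] at hnd
      obtain ⟨hvrest, hndr⟩ := hnd
      by_cases hvp : v = p
      · subst hvp
        show |∑ i ∈ Finset.range (rest.length - 1),
          starFun v O I v (rest.getD i v) (rest.getD (i + 1) v)| ≤ 1
        have key : ∀ i ∈ Finset.range (rest.length - 1),
            starFun v O I v (rest.getD i v) (rest.getD (i + 1) v)
              = psiFn O (rest.getD i v) - psiFn O (rest.getD (i + 1) v) := by
          intro i hi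
          rw [Finset.mem_range] at hi
          have hi1 : i < rest.length := by omega
          have hi2 : i + 1 < rest.length := by omega
          have h1 : rest.getD i v ≠ v := by
            rw [List.getD_eq_getElem _ _ hi1]
            intro he; exact hvrest (he ▸ List.getElem_mem hi1)
          have h2 : rest.getD (i + 1) v ≠ v := by
            rw [List.getD_eq_getElem _ _ hi2]
            intro he; exact hvrest (he ▸ List.getElem_mem hi2)
          rw [starFun_eq_psi h, if_pos rfl, if_neg h1, if_neg h2]; ring
        rw [Finset.sum_congr rfl key,
          Finset.sum_range_sub' (fun i => psiFn O (rest.getD i v))]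
        rcases psiFn_mem O (rest.getD 0 v) with h0 | h0 <;>
          rcases psiFn_mem O (rest.getD (rest.length - 1) v) with h1 | h1 <;>
          rw [h0, h1] <;> norm_num
      · have hpr : p ∈ rest := by
          rcases List.mem_cons.mp hpC with h' | h'
          · exact absurd h'.symm hvp
          · exact h'
        obtain ⟨j, hj, hjp⟩ := List.getElem_of_mem hpr
        show |∑ i ∈ Finset.range (rest.length - 1),
          starFun p O I v (rest.getD i v) (rest.getD (i + 1) v)| ≤ 1
        have key : ∀ i ∈ Finset.range (rest.length - 1),
            starFun p O I v (rest.getD i v) (rest.getD (i + 1) v)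
              = -(if i = j then psiFn O v - psiFn O (rest.getD (i + 1) v) else 0)
                + (if i + 1 = j then psiFn O v - psiFn O (rest.getD i v) else 0) := by
          intro i hi
          rw [Finset.mem_range] at hi
          have hi1 : i < rest.length := by omega
          have hi2 : i + 1 < rest.length := by omega
          rw [starFun_eq_psi h, if_neg hvp, List.getD_eq_getElem _ _ hi1,
            List.getD_eq_getElem _ _ hi2]
          have e1 : (rest[i] = p) = (i = j) := by
            rw [← hjp]; exact propext hndr.getElem_inj_iff
          have e2 : (rest[i + 1] = p) = (i + 1 = j) := by
            rw [← hjp]; exact propext hndr.getElem_inj_iff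
          rw [e1, e2]; ring
        rw [Finset.sum_congr rfl key, Finset.sum_add_distrib, Finset.sum_neg_distrib,
          Finset.sum_ite_eq' (Finset.range (rest.length - 1)) j
            (fun i => psiFn O v - psiFn O (rest.getD (i + 1) v))]
        rcases j with _ | j'
        · have hz : ∀ i ∈ Finset.range (rest.length - 1),
              (if i + 1 = 0 then psiFn O v - psiFn O (rest.getD i v) else 0) = 0 := by
            intro i _; simp
          rw [Finset.sum_congr rfl hz, Finset.sum_const_zero]
          have h0 : (0 : ℕ) ∈ Finset.range (rest.length - 1) := by
            rw [Finset.mem_range]; omega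
          rw [if_pos h0]
          rcases psiFn_mem O v with h1 | h1 <;>
            rcases psiFn_mem O (rest.getD (0 + 1) v) with h2 | h2 <;>
            rw [h1, h2] <;> norm_num
        · have hz : ∀ i ∈ Finset.range (rest.length - 1),
              (if i + 1 = j' + 1 then psiFn O v - psiFn O (rest.getD i v) else 0)
                = (if i = j' then psiFn O v - psiFn O (rest.getD i v) else 0) := by
            intro i _; simp
          rw [Finset.sum_congr rfl hz,
            Finset.sum_ite_eq' (Finset.range (rest.length - 1)) j'
              (fun i => psiFn O v - psiFn O (rest.getD i v))]
          have hj' : j' ∈ Finset.range (rest.length - 1) := by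
            rw [Finset.mem_range]; omega
          rw [if_pos hj']
          by_cases hjj : j' + 1 ∈ Finset.range (rest.length - 1)
          · rw [if_pos hjj]
            rcases psiFn_mem O (rest.getD (j' + 1 + 1) v) with h1 | h1 <;>
              rcases psiFn_mem O (rest.getD j' v) with h2 | h2 <;>
              rcases psiFn_mem O v with h3 | h3 <;>
              rw [h1, h2, h3] <;> norm_num
          · rw [if_neg hjj]
            rcases psiFn_mem O (rest.getD j' v) with h2 | h2 <;>
              rcases psiFn_mem O v with h3 | h3 <;>
              rw [h2, h3] <;> norm_num
  · rw [cycleVal_zero_of_not_mem h C hpC]; norm_num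

/-- a linking function equal to a star function is weak, and vanishes
on cycles not containing the apex. -/
theorem star_implies_weak {V : Type*} [Fintype V] (p : V) (O I : Set V)
    (h : IsStarPartition p O I)
    (f : V → V → V → ℤ) (hf : IsLinkingFun f) (hfstar : f = starFun p O I) :
    (∀ C : List V, IsCycle C → |cycleVal f C| ≤ 1) ∧
    (∀ C : List V, IsCycle C → p ∉ C → cycleVal f C = 0) := by
  subst hfstar
  exact star_implies_weak' p O I h
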